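/- arXiv:2210.01246 — 2 statements merged into one kernel-verified Lean document; each statement's English description precedes it below -/
import Mathlib

section
/- Let E be a locally convex space which is the locally convex direct limit of an increasing sequence of Banach spaces E₁ ⊆ E₂ ⊆ ⋯ with compact inclusion maps (a Silva space). Then every compact subset K of E is contained in some E_j and is compact as a subset of E_j. -/
open Set Metric Topology Filter Pointwise

section Generic

variable {X : Type*} [AddCommGroup X] [Module ℝ X]

theorem convexJoin_eq_image' (s t : Set X) :
    convexJoin ℝ s t =
      (fun p : ℝ × X × X => p.1 • p.2.1 + (1 - p.1) • p.2.2) '' (Icc (0:ℝ) 1 ×ˢ s ×ˢ t) := by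
  ext z
  constructor
  · rintro hz
    rw [mem_convexJoin] at hz
    obtain ⟨a, ha, b, hb, hab⟩ := hz
    obtain ⟨u, v, hu, hv, huv, rfl⟩ := hab
    refine ⟨⟨u, a, b⟩, ⟨⟨hu, by linarith⟩, ha, hb⟩, ?_⟩
    simp only
    rw [show (1:ℝ) - u = v by linarith]
  · rintro ⟨⟨u, a, b⟩, ⟨⟨hu0, hu1⟩, ha, hb⟩, rfl⟩
    rw [mem_convexJoin]
    exact ⟨a, ha, b, hb, u, 1 - u, hu0, by linarith, by ring, rfl⟩

theorem Balanced.convexJoin' {s t : Set X} (hs : Balanced ℝ s) (ht : Balanced ℝ t) :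
    Balanced ℝ (convexJoin ℝ s t) := by
  intro a ha z hz
  obtain ⟨z, hz, rfl⟩ := hz
  rw [convexJoin_eq_image'] at hz ⊢
  obtain ⟨⟨u, x, y⟩, ⟨hu, hx, hy⟩, rfl⟩ := hz
  refine ⟨⟨u, a • x, a • y⟩, ⟨hu, hs.smul_mem ha hx, ht.smul_mem ha hy⟩, ?_⟩
  simp only [smul_add, smul_comm a]

theorem IsCompact.convexJoin' {X : Type*} [AddCommGroup X] [Module ℝ X] [TopologicalSpace X]
    [IsTopologicalAddGroup X] [ContinuousSMul ℝ X] {s t : Set X}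
    (hs : IsCompact s) (ht : IsCompact t) : IsCompact (convexJoin ℝ s t) := by
  rw [convexJoin_eq_image']
  refine ((isCompact_Icc.prod (hs.prod ht))).image ?_
  exact (continuous_fst.smul (continuous_snd.fst)).add
    ((continuous_const.sub continuous_fst).smul continuous_snd.snd)

end Generic
set_option linter.unusedSectionVars false

section Silva

variable {E : Type} [AddCommGroup E] [Module ℝ E] [TopologicalSpace E]
    [IsTopologicalAddGroup E] [ContinuousSMul ℝ E] [LocallyConvexSpace ℝ E]
    {Ej : ℕ → Type} [∀ j, NormedAddCommGroup (Ej j)] [∀ j, NormedSpace ℝ (Ej j)]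
    [∀ j, CompleteSpace (Ej j)]
    (ι : ∀ j, Ej j →ₗ[ℝ] E)
    (step : ∀ j, Ej j →ₗ[ℝ] Ej (j + 1))

/-- The compact "hull" of the unit ball of `Ej k` inside `Ej (k+1)`. -/
noncomputable def CC (k : ℕ) : Set (Ej (k + 1)) :=
  closure (step k '' closedBall 0 1)

theorem CC_isCompact (hcompact : ∀ j, IsCompactOperator (⇑(step j))) (k : ℕ) :
    IsCompact (CC step k) :=
  (hcompact k).isCompact_closure_image_closedBall 1

theorem CC_convex (k : ℕ) : Convex ℝ (CC step k) :=
  ((convex_closedBall (0 : Ej k) 1).linear_image (step k)).closure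

theorem CC_balanced (k : ℕ) : Balanced ℝ (CC step k) := by
  refine Balanced.closure ?_
  intro a ha z hz
  obtain ⟨z, hz, rfl⟩ := hz
  obtain ⟨y, hy, rfl⟩ := hz
  refine ⟨a • y, ?_, (step k).map_smul a y⟩
  rw [mem_closedBall_zero_iff] at hy ⊢
  calc ‖a • y‖ = ‖a‖ * ‖y‖ := norm_smul a y
  _ ≤ 1 * 1 := by
    apply mul_le_mul ha hy (norm_nonneg _) zero_le_one
  _ = 1 := one_mul 1

theorem CC_zero_mem (k : ℕ) : (0 : Ej (k + 1)) ∈ CC step k :=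
  subset_closure ⟨0, mem_closedBall_self zero_le_one, map_zero _⟩

/-- The basic compact convex balanced sets associated to a sequence `ε` of radii. -/
noncomputable def VV (ε : ℕ → ℝ) : (m : ℕ) → Set (Ej m)
  | 0 => {(0 : Ej 0)}
  | (m + 1) => convexJoin ℝ (step m '' VV ε m) (ε m • CC step m)

theorem VV_succ (ε : ℕ → ℝ) (m : ℕ) :
    VV (Ej := Ej) step ε (m + 1)
      = convexJoin ℝ (step m '' VV (Ej := Ej) step ε m) (ε m • CC step m) := rfl

theorem VV_zero_mem (ε : ℕ → ℝ) : ∀ m, (0 : Ej m) ∈ VV (Ej := Ej) step ε m := by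
  intro m
  induction m with
  | zero => rfl
  | succ m ih =>
    have h1 : (0 : Ej (m + 1)) ∈ step m '' VV (Ej := Ej) step ε m := ⟨0, ih, map_zero _⟩
    have h2 : (0 : Ej (m + 1)) ∈ ε m • CC step m := by
      refine ⟨0, CC_zero_mem step m, smul_zero _⟩
    exact subset_convexJoin_left ⟨0, h2⟩ h1

theorem VV_convex (ε : ℕ → ℝ) : ∀ m, Convex ℝ (VV (Ej := Ej) step ε m) := by
  intro m
  induction m with
  | zero => exact convex_singleton 0
  | succ m ih =>
    exact (ih.linear_image (step m)).convexJoin ((CC_convex step m).smul (ε m))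

theorem VV_balanced (ε : ℕ → ℝ) : ∀ m, Balanced ℝ (VV (Ej := Ej) step ε m) := by
  intro m
  induction m with
  | zero =>
    intro a ha z hz
    obtain ⟨z, hz, rfl⟩ := hz
    have hz0 : z = 0 := hz
    show a • z ∈ VV (Ej := Ej) step ε 0
    rw [hz0, smul_zero]
    exact VV_zero_mem step ε 0
  | succ m ih =>
    refine Balanced.convexJoin' ?_ ?_
    · intro a ha z hz
      obtain ⟨z, hz, rfl⟩ := hz
      obtain ⟨y, hy, rfl⟩ := hz
      exact ⟨a • y, ih.smul_mem ha hy, (step m).map_smul a y⟩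
    · intro a ha z hz
      obtain ⟨z, hz, rfl⟩ := hz
      obtain ⟨y, hy, rfl⟩ := hz
      refine ⟨a • y, (CC_balanced step m).smul_mem ha hy, ?_⟩
      show ε m • a • y = a • ε m • y
      rw [smul_comm]

theorem VV_isCompact (hcompact : ∀ j, IsCompactOperator (⇑(step j))) (ε : ℕ → ℝ) :
    ∀ m, IsCompact (VV (Ej := Ej) step ε m) := by
  intro m
  induction m with
  | zero => exact isCompact_singleton
  | succ m ih =>
    exact (ih.image (hcompact m).continuous).convexJoin'
      ((CC_isCompact step hcompact m).smul (ε m))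

theorem VV_congr {ε ε' : ℕ → ℝ} : ∀ m, (∀ k, k < m → ε k = ε' k) →
    VV (Ej := Ej) step ε m = VV (Ej := Ej) step ε' m := by
  intro m
  induction m with
  | zero => intro _; rfl
  | succ m ih =>
    intro h
    have h1 : VV (Ej := Ej) step ε m = VV (Ej := Ej) step ε' m :=
      ih fun k hk => h k (hk.trans m.lt_succ_self)
    show convexJoin ℝ _ _ = convexJoin ℝ _ _
    rw [h1, h m m.lt_succ_self]

theorem smul_subset_smul_balanced {X : Type*} [AddCommGroup X] [Module ℝ X] {C : Set X}
    (hC : Balanced ℝ C) {a b : ℝ} (ha : 0 ≤ a) (hab : a ≤ b) : a • C ⊆ b • C := by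
  rcases eq_or_lt_of_le (ha.trans hab) with hb | hb
  · have : a = 0 := le_antisymm (hab.trans hb.symm.le) ha
    rw [this, ← hb]
  · rintro z ⟨y, hy, rfl⟩
    refine ⟨(b⁻¹ * a) • y, hC.smul_mem ?_ hy, ?_⟩
    · rw [Real.norm_eq_abs, abs_of_nonneg (by positivity)]
      rw [mul_comm, ← div_eq_mul_inv]
      exact div_le_one_of_le₀ hab hb.le
    · show b • (b⁻¹ * a) • y = a • y
      rw [smul_smul]
      congr 1
      field_simp

theorem VV_mono {ε ε' : ℕ → ℝ} (hε : ∀ k, 0 ≤ ε k) (h : ∀ k, ε k ≤ ε' k) :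
    ∀ m, VV (Ej := Ej) step ε m ⊆ VV (Ej := Ej) step ε' m := by
  intro m
  induction m with
  | zero => exact subset_rfl
  | succ m ih =>
    refine convexJoin_mono (image_mono ih) ?_
    exact smul_subset_smul_balanced (CC_balanced step m) (hε m) (h m)

theorem VV_step_subset (ε : ℕ → ℝ) (m : ℕ) :
    step m '' VV (Ej := Ej) step ε m ⊆ VV (Ej := Ej) step ε (m + 1) :=
  subset_convexJoin_left ⟨_, ⟨0, CC_zero_mem step m, smul_zero _⟩⟩

theorem VV_ball_subset (ε : ℕ → ℝ) {m : ℕ} (hm : 0 < ε m) {y : Ej m}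
    (hy : ‖y‖ ≤ ε m) : step m y ∈ VV (Ej := Ej) step ε (m + 1) := by
  have h1 : step m y ∈ ε m • CC step m := by
    refine ⟨step m ((ε m)⁻¹ • y), subset_closure ⟨(ε m)⁻¹ • y, ?_, rfl⟩, ?_⟩
    · rw [mem_closedBall_zero_iff, norm_smul, Real.norm_eq_abs, abs_of_nonneg (by positivity)]
      rw [inv_mul_le_one₀ hm]
      exact hy
    · show ε m • step m ((ε m)⁻¹ • y) = step m y
      rw [← map_smul, smul_smul, mul_inv_cancel₀ hm.ne', one_smul]
  rw [VV_succ]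
  have hne : (step m '' VV (Ej := Ej) step ε m).Nonempty :=
    ⟨step m 0, ⟨0, VV_zero_mem step ε m, rfl⟩⟩
  exact subset_convexJoin_right hne h1

end Silva
set_option linter.unusedSectionVars false

section Silva2

variable {E : Type} [AddCommGroup E] [Module ℝ E] [TopologicalSpace E]
    [IsTopologicalAddGroup E] [ContinuousSMul ℝ E] [LocallyConvexSpace ℝ E]
    {Ej : ℕ → Type} [∀ j, NormedAddCommGroup (Ej j)] [∀ j, NormedSpace ℝ (Ej j)]
    [∀ j, CompleteSpace (Ej j)]
    (ι : ∀ j, Ej j →ₗ[ℝ] E)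
    (step : ∀ j, Ej j →ₗ[ℝ] Ej (j + 1))

theorem lift_mem (hstep : ∀ j x, ι (j + 1) (step j x) = ι j x) (ε : ℕ → ℝ)
    {m m' : ℕ} (h : m ≤ m') {c : ℝ} {x : E}
    (hx : x ∈ ι m '' (c • VV (Ej := Ej) step ε m)) :
    x ∈ ι m' '' (c • VV (Ej := Ej) step ε m') := by
  induction m', h using Nat.le_induction with
  | base => exact hx
  | succ n hn ih =>
    obtain ⟨z, ⟨v, hv, rfl⟩, rfl⟩ := ih
    refine ⟨c • step n v, ⟨step n v, VV_step_subset step ε n ⟨v, hv, rfl⟩, rfl⟩, ?_⟩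
    show (ι (n + 1)) (c • step n v) = (ι n) (c • v)
    rw [← map_smul (step n), hstep]

theorem lift_mem' (hstep : ∀ j x, ι (j + 1) (step j x) = ι j x) (ε : ℕ → ℝ)
    {m m' : ℕ} (h : m ≤ m') :
    ι m '' (VV (Ej := Ej) step ε m) ⊆ ι m' '' (VV (Ej := Ej) step ε m') := by
  induction m', h using Nat.le_induction with
  | base => exact subset_rfl
  | succ n hn ih =>
    refine ih.trans ?_
    rintro x ⟨v, hv, rfl⟩
    exact ⟨step n v, VV_step_subset step ε n ⟨v, hv, rfl⟩, hstep n v⟩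

/-- The candidate zero-neighborhood. -/
noncomputable def UU (ε : ℕ → ℝ) : Set E := ⋃ m, ι m '' VV (Ej := Ej) step ε m

theorem UU_balanced (ε : ℕ → ℝ) : Balanced ℝ (UU (Ej := Ej) ι step ε) := by
  intro a ha z hz
  obtain ⟨z, hz, rfl⟩ := hz
  obtain ⟨S, ⟨m, rfl⟩, v, hv, rfl⟩ := hz
  refine mem_iUnion.2 ⟨m, ⟨a • v, (VV_balanced step ε m).smul_mem ha hv, ?_⟩⟩
  show (ι m) (a • v) = a • (ι m) v
  exact map_smul _ _ _

theorem UU_convex (hstep : ∀ j x, ι (j + 1) (step j x) = ι j x) (ε : ℕ → ℝ) :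
    Convex ℝ (UU (Ej := Ej) ι step ε) := by
  rintro x hx y hy a b ha hb hab
  obtain ⟨S, ⟨m, rfl⟩, hx⟩ := hx
  obtain ⟨S, ⟨m', rfl⟩, hy⟩ := hy
  rcases le_total m m' with h | h
  · replace hx := lift_mem' ι step hstep ε h hx
    obtain ⟨v, hv, rfl⟩ := hx
    obtain ⟨w, hw, rfl⟩ := hy
    refine mem_iUnion.2 ⟨m', ⟨a • v + b • w,
      VV_convex step ε m' hv hw ha hb hab, ?_⟩⟩
    rw [map_add, map_smul, map_smul]
  · replace hy := lift_mem' ι step hstep ε h hy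
    obtain ⟨v, hv, rfl⟩ := hx
    obtain ⟨w, hw, rfl⟩ := hy
    refine mem_iUnion.2 ⟨m, ⟨a • v + b • w,
      VV_convex step ε m hv hw ha hb hab, ?_⟩⟩
    rw [map_add, map_smul, map_smul]

theorem mem_smul_UU (hstep : ∀ j x, ι (j + 1) (step j x) = ι j x)
    {ε : ℕ → ℝ} (hε : ∀ k, 0 < ε k) (j : ℕ) (y : Ej j) {a : ℝ}
    (ha : (ε j)⁻¹ * ‖y‖ ≤ a) (ha' : 0 < a) :
    ι j y ∈ a • UU (Ej := Ej) ι step ε := by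
  have h1 : ‖y‖ ≤ ε j * a := by
    have h2 := mul_le_mul_of_nonneg_left ha (hε j).le
    rwa [← mul_assoc, mul_inv_cancel₀ (hε j).ne', one_mul] at h2
  have hnorm : ‖a⁻¹ • y‖ ≤ ε j := by
    rw [norm_smul, Real.norm_eq_abs, abs_of_nonneg (inv_nonneg.2 ha'.le)]
    calc a⁻¹ * ‖y‖ ≤ a⁻¹ * (ε j * a) := mul_le_mul_of_nonneg_left h1 (inv_nonneg.2 ha'.le)
    _ = ε j := by field_simp
  refine ⟨ι (j+1) (step j (a⁻¹ • y)), ?_, ?_⟩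
  · exact mem_iUnion.2 ⟨j + 1, ⟨step j (a⁻¹ • y),
      VV_ball_subset step ε (hε j) hnorm, rfl⟩⟩
  · show a • (ι (j + 1)) ((step j) (a⁻¹ • y)) = (ι j) y
    rw [← map_smul, ← map_smul, smul_smul, mul_inv_cancel₀ ha'.ne', one_smul, hstep]

theorem UU_absorbent (hstep : ∀ j x, ι (j + 1) (step j x) = ι j x)
    (hunion : ∀ x : E, ∃ j, x ∈ LinearMap.range (ι j))
    {ε : ℕ → ℝ} (hε : ∀ k, 0 < ε k) :
    Absorbent ℝ (UU (Ej := Ej) ι step ε) := by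
  intro x
  obtain ⟨j, y, rfl⟩ := hunion x
  set a : ℝ := (ε j)⁻¹ * ‖y‖ + 1 with ha_def
  have ha' : 0 < a := by
    rw [ha_def]
    exact add_pos_of_nonneg_of_pos (mul_nonneg (inv_nonneg.2 (hε j).le) (norm_nonneg y)) one_pos
  refine Absorbs.of_norm ⟨a, fun c hc z hz => ?_⟩
  rw [mem_singleton_iff] at hz
  subst hz
  have hc0 : c ≠ 0 := by
    intro h
    rw [h, norm_zero] at hc
    linarith
  have hcpos : 0 < ‖c‖ := lt_of_lt_of_le ha' hc
  have h1 : ι j y ∈ a • UU (Ej := Ej) ι step ε :=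
    mem_smul_UU ι step hstep hε j y (by linarith) ha'
  obtain ⟨u, hu, hux⟩ := h1
  rw [← hux]
  have hnorm1 : ‖c⁻¹ * a‖ ≤ 1 := by
    rw [norm_mul, norm_inv, Real.norm_eq_abs a, abs_of_nonneg ha'.le]
    calc ‖c‖⁻¹ * a ≤ ‖c‖⁻¹ * ‖c‖ := mul_le_mul_of_nonneg_left hc (inv_nonneg.2 hcpos.le)
    _ = 1 := inv_mul_cancel₀ hcpos.ne'
  refine ⟨(c⁻¹ * a) • u, (UU_balanced ι step ε).smul_mem hnorm1 hu, ?_⟩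
  show c • (c⁻¹ * a) • u = a • u
  rw [smul_smul, ← mul_assoc, mul_inv_cancel₀ hc0, one_mul]

theorem gauge_UU_le (hstep : ∀ j x, ι (j + 1) (step j x) = ι j x)
    {ε : ℕ → ℝ} (hε : ∀ k, 0 < ε k) (j : ℕ) (y : Ej j) :
    gauge (UU (Ej := Ej) ι step ε) (ι j y) ≤ (ε j)⁻¹ * ‖y‖ := by
  rcases eq_or_ne y 0 with rfl | hy
  · simp
  · exact gauge_le_of_mem (mul_nonneg (inv_nonneg.2 (hε j).le) (norm_nonneg y))
      (mem_smul_UU ι step hstep hε j y le_rfl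
        (mul_pos (inv_pos.2 (hε j)) (norm_pos_iff.2 hy)))

theorem gauge_UU_lower (hstep : ∀ j x, ι (j + 1) (step j x) = ι j x)
    (hunion : ∀ x : E, ∃ j, x ∈ LinearMap.range (ι j))
    {ε : ℕ → ℝ} (hε : ∀ k, 0 < ε k) {c : ℝ} (hc : 0 < c) {x : E}
    (h : ∀ m, x ∉ ι m '' (c • VV (Ej := Ej) step ε m)) :
    c ≤ gauge (UU (Ej := Ej) ι step ε) x := by
  by_contra hlt
  push_neg at hlt
  obtain ⟨b, hb0, hbc, hmem⟩ :=
    exists_lt_of_gauge_lt (UU_absorbent ι step hstep hunion hε) hlt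
  obtain ⟨u, hu, rfl⟩ := hmem
  obtain ⟨S, ⟨m, rfl⟩, v, hv, rfl⟩ := hu
  refine h m ⟨b • v, ?_, by show (ι m) (b • v) = b • (ι m) v; exact map_smul _ _ _⟩
  have : b • v = c • ((c⁻¹ * b) • v) := by
    rw [smul_smul, ← mul_assoc, mul_inv_cancel₀ hc.ne', one_mul]
  rw [this]
  refine smul_mem_smul_set ((VV_balanced step ε m).smul_mem ?_ hv)
  rw [Real.norm_eq_abs, abs_of_nonneg (mul_nonneg (inv_nonneg.2 hc.le) hb0.le)]
  calc c⁻¹ * b ≤ c⁻¹ * c := mul_le_mul_of_nonneg_left hbc.le (inv_nonneg.2 hc.le)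
  _ = 1 := inv_mul_cancel₀ hc.ne'

end Silva2
section Silva3

set_option linter.unusedSectionVars false

variable {E : Type} [AddCommGroup E] [Module ℝ E] [TopologicalSpace E]
    [IsTopologicalAddGroup E] [ContinuousSMul ℝ E] [LocallyConvexSpace ℝ E]
    {Ej : ℕ → Type} [∀ j, NormedAddCommGroup (Ej j)] [∀ j, NormedSpace ℝ (Ej j)]
    [∀ j, CompleteSpace (Ej j)]
    (ι : ∀ j, Ej j →ₗ[ℝ] E)
    (step : ∀ j, Ej j →ₗ[ℝ] Ej (j + 1))

theorem shrink (hstep : ∀ j x, ι (j + 1) (step j x) = ι j x)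
    (hinj : ∀ j, Function.Injective (ι j))
    (hcompact : ∀ j, IsCompactOperator (⇑(step j)))
    (ε : ℕ → ℝ) (hε : ∀ k, 0 < ε k) (m : ℕ) {c : ℝ} (hc : 0 < c) {x : E}
    (hx : x ∉ ι m '' (c • VV (Ej := Ej) step ε m)) :
    ∃ δ, 0 < δ ∧ ∀ δ', 0 < δ' → δ' ≤ δ →
      x ∉ ι (m + 1) '' (c • VV (Ej := Ej) step (Function.update ε m δ') (m + 1)) := by
  suffices h : ∃ δ, 0 < δ ∧
      x ∉ ι (m + 1) '' (c • VV (Ej := Ej) step (Function.update ε m δ) (m + 1)) by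
    obtain ⟨δ, hδ, hδx⟩ := h
    refine ⟨δ, hδ, fun δ' h0 hle hmem => hδx ?_⟩
    have hsub : VV (Ej := Ej) step (Function.update ε m δ') (m + 1) ⊆
        VV (Ej := Ej) step (Function.update ε m δ) (m + 1) := by
      refine VV_mono step (fun k => ?_) (fun k => ?_) (m + 1)
      · rcases eq_or_ne k m with rfl | hk
        · rw [Function.update_self]; exact h0.le
        · rw [Function.update_of_ne hk]; exact (hε k).le
      · rcases eq_or_ne k m with rfl | hk
        · rw [Function.update_self, Function.update_self]; exact hle
        · rw [Function.update_of_ne hk, Function.update_of_ne hk]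
    exact (Set.image_mono (smul_set_mono hsub)) hmem
  by_contra hcon
  push_neg at hcon
  have key : ∀ n : ℕ, ∃ (t : ℝ) (v : Ej m) (w : Ej (m + 1)),
      t ∈ Icc (0:ℝ) 1 ∧ v ∈ VV (Ej := Ej) step ε m ∧ w ∈ CC step m ∧
      x = ι (m + 1) (c • (t • step m v + (1 - t) • ((((n:ℝ) + 1)⁻¹) • w))) := by
    intro n
    have hpos : (0:ℝ) < ((n:ℝ) + 1)⁻¹ := by positivity
    obtain ⟨z, hz, hzx⟩ := hcon (((n:ℝ) + 1)⁻¹) hpos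
    obtain ⟨u, hu, rfl⟩ := hz
    rw [VV_succ] at hu
    rw [VV_congr step m (fun k hk => Function.update_of_ne hk.ne _ _),
      Function.update_self] at hu
    rw [convexJoin_eq_image'] at hu
    obtain ⟨⟨t, a, b⟩, ⟨⟨ht0, ht1⟩, ⟨v, hv, rfl⟩, ⟨w, hw, rfl⟩⟩, rfl⟩ := hu
    exact ⟨t, v, w, ⟨ht0, ht1⟩, hv, hw, hzx.symm⟩
  choose t v w ht hv hw hxz using key
  set z : ℕ → Ej (m + 1) :=
    fun n => c • (t n • step m (v n) + (1 - t n) • ((((n:ℝ) + 1)⁻¹) • w n)) with hzdef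
  have hzconst : ∀ n, z n = z 0 := by
    intro n
    apply hinj (m + 1)
    rw [← hxz n, ← hxz 0]
  -- compactness of the parameter set
  have hP : IsCompact ((Icc (0:ℝ) 1) ×ˢ ((VV (Ej := Ej) step ε m) ×ˢ (CC step m))) :=
    isCompact_Icc.prod ((VV_isCompact step hcompact ε m).prod (CC_isCompact step hcompact m))
  have hqmem : ∀ n, ((t n, (v n, w n)) : ℝ × Ej m × Ej (m + 1)) ∈
      (Icc (0:ℝ) 1) ×ˢ ((VV (Ej := Ej) step ε m) ×ˢ (CC step m)) :=
    fun n => ⟨ht n, hv n, hw n⟩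
  obtain ⟨⟨tl, vl, wl⟩, hlmem, φ, hφ, hconv⟩ := hP.tendsto_subseq hqmem
  have h_t : Filter.Tendsto (fun n => t (φ n)) Filter.atTop (𝓝 tl) :=
    (continuous_fst.tendsto _).comp hconv
  have h_v : Filter.Tendsto (fun n => v (φ n)) Filter.atTop (𝓝 vl) :=
    ((continuous_fst.comp continuous_snd).tendsto _).comp hconv
  have h_w : Filter.Tendsto (fun n => w (φ n)) Filter.atTop (𝓝 wl) :=
    ((continuous_snd.comp continuous_snd).tendsto _).comp hconv
  have h_δ : Filter.Tendsto (fun n => (((φ n : ℝ)) + 1)⁻¹) Filter.atTop (𝓝 0) := by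
    have h1 : Filter.Tendsto (fun n : ℕ => (((n : ℝ)) + 1)⁻¹) Filter.atTop (𝓝 0) := by
      simpa [one_div] using tendsto_one_div_add_atTop_nhds_zero_nat (𝕜 := ℝ)
    exact h1.comp hφ.tendsto_atTop
  have hstep_cont : Continuous (step m) := (hcompact m).continuous
  have hlim : Filter.Tendsto (fun n => z (φ n)) Filter.atTop
      (𝓝 (c • (tl • step m vl + (1 - tl) • ((0:ℝ) • wl)))) := by
    refine Filter.Tendsto.const_smul ?_ c
    refine Filter.Tendsto.add ?_ ?_
    · exact h_t.smul ((hstep_cont.tendsto _).comp h_v)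
    · exact (tendsto_const_nhds.sub h_t).smul (h_δ.smul h_w)
  have hconstlim : Filter.Tendsto (fun n => z (φ n)) Filter.atTop (𝓝 (z 0)) := by
    have : (fun n => z (φ n)) = fun _ => z 0 := funext fun n => hzconst (φ n)
    rw [this]
    exact tendsto_const_nhds
  have heq : z 0 = c • (tl • step m vl + (1 - tl) • ((0:ℝ) • wl)) :=
    tendsto_nhds_unique hconstlim hlim
  rw [zero_smul, smul_zero, add_zero] at heq
  -- contradiction with hx
  refine hx ?_
  have htl1 : ‖tl‖ ≤ 1 := by
    rw [Real.norm_eq_abs, abs_of_nonneg hlmem.1.1]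
    exact hlmem.1.2
  refine ⟨c • (tl • vl), smul_mem_smul_set
    ((VV_balanced step ε m).smul_mem htl1 hlmem.2.1), ?_⟩
  have : (ι m) (c • (tl • vl)) = (ι (m + 1)) (step m (c • (tl • vl))) := (hstep m _).symm
  rw [this, hxz 0]
  congr 1
  have h2 : (step m) (c • (tl • vl)) = c • tl • (step m) vl := by rw [map_smul, map_smul]
  rw [h2, ← heq]
section WithSN

/-- Type synonym of `G` endowed with the topology coming from a single seminorm `q`. -/
def WithSN {G : Type} [AddCommGroup G] [Module ℝ G] (_q : Seminorm ℝ G) : Type := G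

variable {G : Type} [AddCommGroup G] [Module ℝ G] (q : Seminorm ℝ G)

instance : AddCommGroup (WithSN q) := inferInstanceAs (AddCommGroup G)
instance : Module ℝ (WithSN q) := inferInstanceAs (Module ℝ G)

/-- The identity as a linear map into the synonym. -/
def toSN : G →ₗ[ℝ] WithSN q := LinearMap.id (R := ℝ) (M := G)

/-- The seminorm family consisting only of `q`. -/
def snFamily : SeminormFamily ℝ (WithSN q) (Fin 1) := fun _ => q

noncomputable instance : TopologicalSpace (WithSN q) :=
  (snFamily q).moduleFilterBasis.topology

theorem withSN_withSeminorms : WithSeminorms (snFamily q) := ⟨rfl⟩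

instance : IsTopologicalAddGroup (WithSN q) :=
  (withSN_withSeminorms q).topologicalAddGroup

instance : ContinuousSMul ℝ (WithSN q) :=
  (withSN_withSeminorms q).continuousSMul

instance : LocallyConvexSpace ℝ (WithSN q) :=
  (withSN_withSeminorms q).toLocallyConvexSpace

theorem continuous_q_withSN : Continuous fun z : WithSN q => q (toSN q z) := by
  have h := (withSN_withSeminorms q).continuous_seminorm 0
  exact h

end WithSN

section Silva4

set_option linter.unusedSectionVars false

variable {E : Type} [AddCommGroup E] [Module ℝ E] [TopologicalSpace E]
    [IsTopologicalAddGroup E] [ContinuousSMul ℝ E] [LocallyConvexSpace ℝ E]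
    {Ej : ℕ → Type} [∀ j, NormedAddCommGroup (Ej j)] [∀ j, NormedSpace ℝ (Ej j)]
    [∀ j, CompleteSpace (Ej j)]
    (ι : ∀ j, Ej j →ₗ[ℝ] E)
    (step : ∀ j, Ej j →ₗ[ℝ] Ej (j + 1))

theorem continuous_seminorm_of_bounds (q : Seminorm ℝ E)
    (hfinal : ∀ (F : Type) [AddCommGroup F] [Module ℝ F] [TopologicalSpace F]
      [IsTopologicalAddGroup F] [ContinuousSMul ℝ F] [LocallyConvexSpace ℝ F]
      (f : E →ₗ[ℝ] F), (∀ j, Continuous (f ∘ ι j)) → Continuous f)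
    (hbound : ∀ j, ∃ C : NNReal, ∀ y : Ej j, q (ι j y) ≤ C * ‖y‖) :
    Continuous ⇑q := by
  have hcomp : ∀ j, Continuous ((toSN q) ∘ (ι j)) := by
    intro j
    have : Continuous ⇑((toSN q).comp (ι j)) := by
      refine Seminorm.cont_normedSpace_to_withSeminorms (Ej j)
        (withSN_withSeminorms q) ((toSN q).comp (ι j)) ?_
      intro i
      obtain ⟨C, hC⟩ := hbound j
      refine ⟨C, fun y => ?_⟩
      show ((snFamily q i).comp ((toSN q).comp (ι j))) y ≤ (C • normSeminorm ℝ (Ej j)) y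
      have h1 : (snFamily q i).comp ((toSN q).comp (ι j)) y = q (ι j y) := rfl
      have h2 : (C • normSeminorm ℝ (Ej j)) y = (C : ℝ) * ‖y‖ := rfl
      rw [h1, h2]
      exact hC y
    exact this
  have hmain : Continuous ⇑(toSN q) := hfinal (WithSN q) (toSN q) hcomp
  have : Continuous fun z : E => q (toSN q (toSN q z)) :=
    (continuous_q_withSN q).comp hmain
  exact this

end Silva4
section Silva5

set_option linter.unusedSectionVars false

variable {E : Type} [AddCommGroup E] [Module ℝ E] [TopologicalSpace E]
    [IsTopologicalAddGroup E] [ContinuousSMul ℝ E] [LocallyConvexSpace ℝ E]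
    {Ej : ℕ → Type} [∀ j, NormedAddCommGroup (Ej j)] [∀ j, NormedSpace ℝ (Ej j)]
    [∀ j, CompleteSpace (Ej j)]
    (ι : ∀ j, Ej j →ₗ[ℝ] E)
    (step : ∀ j, Ej j →ₗ[ℝ] Ej (j + 1))

open Classical in
/-- Next radius for the single-point separation recursion. -/
noncomputable def nextδ (c : ℝ) (x : E) (m : ℕ) (e : ℕ → ℝ) : ℝ :=
  if h : ∃ δ, 0 < δ ∧ ∀ δ', 0 < δ' → δ' ≤ δ →
      x ∉ ι (m + 1) '' (c • VV (Ej := Ej) step (Function.update e m δ') (m + 1)) then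
    Classical.choose h
  else 1

theorem nextδ_pos (c : ℝ) (x : E) (m : ℕ) (e : ℕ → ℝ) : 0 < nextδ ι step c x m e := by
  rw [nextδ]
  split_ifs with h
  · exact (Classical.choose_spec h).1
  · exact one_pos

/-- The radii functions for the single-point separation recursion. -/
noncomputable def es (c : ℝ) (x : E) : ℕ → (ℕ → ℝ)
  | 0 => fun _ => 1
  | (m + 1) => Function.update (es c x m) m (nextδ ι step c x m (es c x m))

theorem es_pos (c : ℝ) (x : E) : ∀ m k, 0 < es ι step c x m k := by
  intro m
  induction m with
  | zero => intro k; exact one_pos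
  | succ m ih =>
    intro k
    show 0 < Function.update (es ι step c x m) m (nextδ ι step c x m (es ι step c x m)) k
    rcases eq_or_ne k m with rfl | hk
    · rw [Function.update_self]; exact nextδ_pos ι step c x k _
    · rw [Function.update_of_ne hk]; exact ih k

theorem es_stab (c : ℝ) (x : E) : ∀ m m' k, k < m → m ≤ m' →
    es ι step c x m' k = es ι step c x m k := by
  intro m m' k hk h
  induction m', h using Nat.le_induction with
  | base => rfl
  | succ n hn ih =>
    rw [← ih]
    show Function.update (es ι step c x n) n (nextδ ι step c x n (es ι step c x n)) k
      = es ι step c x n k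
    exact Function.update_of_ne (by omega) _ _

theorem rec_single (hstep : ∀ j x, ι (j + 1) (step j x) = ι j x)
    (hinj : ∀ j, Function.Injective (ι j))
    (hcompact : ∀ j, IsCompactOperator (⇑(step j)))
    {c : ℝ} (hc : 0 < c) {x : E} (hx : x ≠ 0) :
    ∃ ε : ℕ → ℝ, (∀ k, 0 < ε k) ∧ ∀ m, x ∉ ι m '' (c • VV (Ej := Ej) step ε m) := by
  set ε : ℕ → ℝ := fun k => es ι step c x (k + 1) k with hεdef
  have hεpos : ∀ k, 0 < ε k := fun k => es_pos ι step c x (k + 1) k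
  have hεstab : ∀ m k, k < m → es ι step c x m k = ε k := by
    intro m k hk
    exact es_stab ι step c x (k + 1) m k k.lt_succ_self (by omega)
  have hVV : ∀ m, VV (Ej := Ej) step ε m = VV (Ej := Ej) step (es ι step c x m) m :=
    fun m => VV_congr step m fun k hk => (hεstab m k hk).symm
  refine ⟨ε, hεpos, ?_⟩
  intro m
  induction m with
  | zero =>
    rintro ⟨v, hv, hvx⟩
    obtain ⟨w, hw, rfl⟩ := hv
    have hw0 : w = (0 : Ej 0) := hw
    apply hx
    rw [← hvx, hw0]
    show (ι 0) (c • (0 : Ej 0)) = 0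
    rw [smul_zero, map_zero]
  | succ m ih =>
    -- transport invariant to the `es` function
    rw [hVV m] at ih
    have hcond := shrink ι step hstep hinj hcompact (es ι step c x m)
      (es_pos ι step c x m) m hc ih
    have hnext : nextδ ι step c x m (es ι step c x m) = Classical.choose hcond := by
      rw [nextδ, dif_pos hcond]
    have hspec := Classical.choose_spec hcond
    have h1 : x ∉ ι (m + 1) ''
        (c • VV (Ej := Ej) step
          (Function.update (es ι step c x m) m (Classical.choose hcond)) (m + 1)) :=
      hspec.2 _ hspec.1 le_rfl
    have h2 : VV (Ej := Ej) step ε (m + 1) = VV (Ej := Ej) step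
        (Function.update (es ι step c x m) m (Classical.choose hcond)) (m + 1) := by
      refine VV_congr step (m + 1) fun k hk => ?_
      rcases eq_or_ne k m with rfl | hkm
      · rw [Function.update_self, ← hnext]
        have : ε k = Function.update (es ι step c x k) k
            (nextδ ι step c x k (es ι step c x k)) k := rfl
        rw [this, Function.update_self]
      · rw [Function.update_of_ne hkm]
        have hk' : k < m := by omega
        rw [hεstab m k hk']
    rw [h2]
    exact h1

theorem silva_t2 (hstep : ∀ j x, ι (j + 1) (step j x) = ι j x)
    (hinj : ∀ j, Function.Injective (ι j))
    (hcompact : ∀ j, IsCompactOperator (⇑(step j)))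
    (hunion : ∀ x : E, ∃ j, x ∈ LinearMap.range (ι j))
    (hfinal : ∀ (F : Type) [AddCommGroup F] [Module ℝ F] [TopologicalSpace F]
      [IsTopologicalAddGroup F] [ContinuousSMul ℝ F] [LocallyConvexSpace ℝ F]
      (f : E →ₗ[ℝ] F), (∀ j, Continuous (f ∘ ι j)) → Continuous f) :
    T2Space E := by
  refine IsTopologicalAddGroup.t2Space_of_zero_sep fun x hx => ?_
  obtain ⟨ε, hεpos, hP⟩ := rec_single ι step hstep hinj hcompact one_pos hx
  set q : Seminorm ℝ E := gaugeSeminorm (UU_balanced ι step ε)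
    (UU_convex ι step hstep ε) (UU_absorbent ι step hstep hunion hεpos) with hqdef
  have hqg : ∀ z, q z = gauge (UU (Ej := Ej) ι step ε) z := fun z => rfl
  have hq_cont : Continuous ⇑q := by
    refine continuous_seminorm_of_bounds ι q hfinal fun j => ?_
    refine ⟨((ε j)⁻¹).toNNReal, fun y => ?_⟩
    rw [hqg]
    have : (((ε j)⁻¹).toNNReal : ℝ) = (ε j)⁻¹ :=
      Real.coe_toNNReal _ (inv_nonneg.2 (hεpos j).le)
    rw [this]
    exact gauge_UU_le ι step hstep hεpos j y
  refine ⟨{z | q z < 1}, ?_, ?_⟩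
  · have hopen : IsOpen {z : E | q z < 1} := isOpen_lt hq_cont continuous_const
    refine hopen.mem_nhds ?_
    show q 0 < 1
    rw [map_zero]
    exact one_pos
  · show ¬ (q x < 1)
    push_neg
    rw [hqg]
    exact gauge_UU_lower ι step hstep hunion hεpos one_pos hP
end Silva5
section Silva6

set_option linter.unusedSectionVars false

variable {E : Type} [AddCommGroup E] [Module ℝ E] [TopologicalSpace E]
    [IsTopologicalAddGroup E] [ContinuousSMul ℝ E] [LocallyConvexSpace ℝ E]
    {Ej : ℕ → Type} [∀ j, NormedAddCommGroup (Ej j)] [∀ j, NormedSpace ℝ (Ej j)]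
    [∀ j, CompleteSpace (Ej j)]
    (ι : ∀ j, Ej j →ₗ[ℝ] E)
    (step : ∀ j, Ej j →ₗ[ℝ] Ej (j + 1))

theorem gaugeUU_continuous (hstep : ∀ j x, ι (j + 1) (step j x) = ι j x)
    (hunion : ∀ x : E, ∃ j, x ∈ LinearMap.range (ι j))
    (hfinal : ∀ (F : Type) [AddCommGroup F] [Module ℝ F] [TopologicalSpace F]
      [IsTopologicalAddGroup F] [ContinuousSMul ℝ F] [LocallyConvexSpace ℝ F]
      (f : E →ₗ[ℝ] F), (∀ j, Continuous (f ∘ ι j)) → Continuous f)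
    {ε : ℕ → ℝ} (hεpos : ∀ k, 0 < ε k) :
    Continuous (gauge (UU (Ej := Ej) ι step ε)) := by
  set q : Seminorm ℝ E := gaugeSeminorm (UU_balanced ι step ε)
    (UU_convex ι step hstep ε) (UU_absorbent ι step hstep hunion hεpos) with hqdef
  have hqg : ∀ z, q z = gauge (UU (Ej := Ej) ι step ε) z := fun z => rfl
  have hq_cont : Continuous ⇑q := by
    refine continuous_seminorm_of_bounds ι q hfinal fun j => ?_
    refine ⟨((ε j)⁻¹).toNNReal, fun y => ?_⟩
    rw [hqg]
    have : (((ε j)⁻¹).toNNReal : ℝ) = (ε j)⁻¹ :=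
      Real.coe_toNNReal _ (inv_nonneg.2 (hεpos j).le)
    rw [this]
    exact gauge_UU_le ι step hstep hεpos j y
  exact hq_cont

open Classical in
/-- Choice of a point of `K` escaping the current compact candidate. -/
noncomputable def pickx (K : Set E) (m : ℕ) (e : ℕ → ℝ) : E :=
  if h : ∃ y, y ∈ K ∧ y ∉ ι m '' ((2 * (m : ℝ) + 2) • VV (Ej := Ej) step e m) then
    Classical.choose h
  else 0

open Classical in
/-- Choice of the next radius in the master recursion. -/
noncomputable def nextδM (m : ℕ) (e : ℕ → ℝ) (xs : ℕ → E) : ℝ :=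
  if h : ∃ δ, 0 < δ ∧ ∀ j, j ≤ m → xs j ∉
      ι (m + 1) '' ((2 * (j : ℝ) + 2) • VV (Ej := Ej) step (Function.update e m δ) (m + 1)) then
    Classical.choose h
  else 1

theorem nextδM_pos (m : ℕ) (e : ℕ → ℝ) (xs : ℕ → E) : 0 < nextδM ι step m e xs := by
  rw [nextδM]
  split_ifs with h
  · exact (Classical.choose_spec h).1
  · exact one_pos

/-- The state of the master recursion: radii and chosen points. -/
noncomputable def SS (K : Set E) : ℕ → ((ℕ → ℝ) × (ℕ → E))
  | 0 => (fun _ => 1, fun _ => 0)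
  | (m + 1) =>
      (Function.update (SS K m).1 m
        (nextδM ι step m (SS K m).1
          (Function.update (SS K m).2 m (pickx ι step K m (SS K m).1))),
       Function.update (SS K m).2 m (pickx ι step K m (SS K m).1))

theorem SS1_pos (K : Set E) : ∀ m k, 0 < (SS ι step K m).1 k := by
  intro m
  induction m with
  | zero => intro k; exact one_pos
  | succ m ih =>
    intro k
    show 0 < Function.update (SS ι step K m).1 m _ k
    rcases eq_or_ne k m with rfl | hk
    · rw [Function.update_self]; exact nextδM_pos ι step k _ _
    · rw [Function.update_of_ne hk]; exact ih k

theorem SS1_stab (K : Set E) : ∀ m m' k, k < m → m ≤ m' →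
    (SS ι step K m').1 k = (SS ι step K m).1 k := by
  intro m m' k hk h
  induction m', h using Nat.le_induction with
  | base => rfl
  | succ n hn ih =>
    rw [← ih]
    show Function.update (SS ι step K n).1 n _ k = _
    exact Function.update_of_ne (by omega) _ _

theorem SS2_stab (K : Set E) : ∀ m m' j, j < m → m ≤ m' →
    (SS ι step K m').2 j = (SS ι step K m).2 j := by
  intro m m' j hj h
  induction m', h using Nat.le_induction with
  | base => rfl
  | succ n hn ih =>
    rw [← ih]
    show Function.update (SS ι step K n).2 n _ j = _
    exact Function.update_of_ne (by omega) _ _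

theorem rec_master (hstep : ∀ j x, ι (j + 1) (step j x) = ι j x)
    (hinj : ∀ j, Function.Injective (ι j))
    (hcompact : ∀ j, IsCompactOperator (⇑(step j)))
    (K : Set E)
    (hpick : ∀ m (e : ℕ → ℝ), (∀ k, 0 < e k) →
      ∃ y, y ∈ K ∧ y ∉ ι m '' ((2 * (m : ℝ) + 2) • VV (Ej := Ej) step e m)) :
    ∃ (ε : ℕ → ℝ) (x : ℕ → E), (∀ k, 0 < ε k) ∧ (∀ j, x j ∈ K) ∧
      ∀ (j m : ℕ), x j ∉ ι m '' ((2 * (j : ℝ) + 2) • VV (Ej := Ej) step ε m) := by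
  set ε : ℕ → ℝ := fun k => (SS ι step K (k + 1)).1 k with hεdef
  set xx : ℕ → E := fun j => (SS ι step K (j + 1)).2 j with hxdef
  have hεpos : ∀ k, 0 < ε k := fun k => SS1_pos ι step K (k + 1) k
  have hεstab : ∀ m k, k < m → (SS ι step K m).1 k = ε k := by
    intro m k hk
    exact SS1_stab ι step K (k + 1) m k k.lt_succ_self (by omega)
  have hxstab : ∀ m j, j < m → (SS ι step K m).2 j = xx j := by
    intro m j hj
    exact SS2_stab ι step K (j + 1) m j j.lt_succ_self (by omega)
  have hVV : ∀ m, VV (Ej := Ej) step ε m = VV (Ej := Ej) step ((SS ι step K m).1) m :=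
    fun m => VV_congr step m fun k hk => (hεstab m k hk).symm
  have hxm : ∀ m, xx m = pickx ι step K m ((SS ι step K m).1) := by
    intro m
    show (SS ι step K (m + 1)).2 m = _
    show Function.update (SS ι step K m).2 m _ m = _
    rw [Function.update_self]
  have hpickspec : ∀ m, xx m ∈ K ∧
      xx m ∉ ι m '' ((2 * (m : ℝ) + 2) • VV (Ej := Ej) step ε m) := by
    intro m
    have hcond := hpick m ((SS ι step K m).1) (SS1_pos ι step K m)
    have h1 : pickx ι step K m ((SS ι step K m).1) = Classical.choose hcond := by
      rw [pickx, dif_pos hcond]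
    have hspec := Classical.choose_spec hcond
    rw [hxm m, h1, hVV m]
    exact hspec
  have hInv : ∀ m, ∀ j, j ≤ m →
      xx j ∉ ι m '' ((2 * (j : ℝ) + 2) • VV (Ej := Ej) step ε m) := by
    intro m
    induction m with
    | zero =>
      intro j hj
      interval_cases j
      exact (hpickspec 0).2
    | succ m ih =>
      -- the new radius works for all old points
      have hsh : ∀ j : ℕ, ∃ δ, 0 < δ ∧ (j ≤ m → ∀ δ', 0 < δ' → δ' ≤ δ →
          xx j ∉ ι (m + 1) '' ((2 * (j : ℝ) + 2) •
            VV (Ej := Ej) step (Function.update ((SS ι step K m).1) m δ') (m + 1))) := by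
        intro j
        by_cases hj : j ≤ m
        · have hxj : xx j ∉ ι m '' ((2 * (j : ℝ) + 2) •
              VV (Ej := Ej) step ((SS ι step K m).1) m) := by
            rw [← hVV m]; exact ih j hj
          obtain ⟨δ, hδ, hδ2⟩ := shrink ι step hstep hinj hcompact
            ((SS ι step K m).1) (SS1_pos ι step K m) m (by positivity) hxj
          exact ⟨δ, hδ, fun _ => hδ2⟩
        · exact ⟨1, one_pos, fun h => absurd h hj⟩
      choose δf hδfpos hδfprop using hsh
      set δ : ℝ := (Finset.range (m + 1)).inf' ⟨0, Finset.mem_range.2 (by omega)⟩ δf with hδdef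
      have hδpos : 0 < δ := by
        rw [hδdef]
        refine (Finset.lt_inf'_iff _).2 ?_
        intro j _
        exact hδfpos j
      have hδle : ∀ j, j ≤ m → δ ≤ δf j := by
        intro j hj
        exact Finset.inf'_le _ (Finset.mem_range.2 (by omega))
      set xs' : ℕ → E :=
        Function.update (SS ι step K m).2 m (pickx ι step K m ((SS ι step K m).1)) with hxs'def
      have hxs' : ∀ j, j ≤ m → xs' j = xx j := by
        intro j hj
        rcases eq_or_ne j m with rfl | hjm
        · rw [hxs'def, Function.update_self, hxm j]
        · rw [hxs'def, Function.update_of_ne hjm]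
          exact hxstab m j (by omega)
      have hcond : ∃ d, 0 < d ∧ ∀ j, j ≤ m → xs' j ∉
          ι (m + 1) '' ((2 * (j : ℝ) + 2) •
            VV (Ej := Ej) step (Function.update ((SS ι step K m).1) m d) (m + 1)) := by
        refine ⟨δ, hδpos, fun j hj => ?_⟩
        rw [hxs' j hj]
        exact hδfprop j hj δ hδpos (hδle j hj)
      have hnext : nextδM ι step m ((SS ι step K m).1) xs' = Classical.choose hcond := by
        rw [nextδM, dif_pos hcond]
      have hspec := Classical.choose_spec hcond
      have hεm : ε m = Classical.choose hcond := by
        have h0 : ε m = (SS ι step K (m + 1)).1 m := rfl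
        have h1 : (SS ι step K (m + 1)).1 m
            = Function.update (SS ι step K m).1 m
              (nextδM ι step m ((SS ι step K m).1) xs') m := rfl
        rw [h0, h1, Function.update_self, hnext]
      have hVVs : VV (Ej := Ej) step ε (m + 1) = VV (Ej := Ej) step
          (Function.update ((SS ι step K m).1) m (Classical.choose hcond)) (m + 1) := by
        refine VV_congr step (m + 1) fun k hk => ?_
        rcases eq_or_ne k m with rfl | hkm
        · rw [Function.update_self, hεm]
        · rw [Function.update_of_ne hkm]
          exact (hεstab m k (by omega)).symm
      intro j hj
      by_cases hjm : j ≤ m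
      · rw [hVVs]
        have h3 := hspec.2 j hjm
        rw [hxs' j hjm] at h3
        exact h3
      · have hje : j = m + 1 := by omega
        subst hje
        exact (hpickspec (m + 1)).2
  refine ⟨ε, xx, hεpos, fun j => (hpickspec j).1, ?_⟩
  intro j m
  rcases le_or_gt j m with h | h
  · exact hInv m j h
  · intro hmem
    exact hInv j j le_rfl (lift_mem ι step hstep ε h.le hmem)

end Silva6
/-- Compact regularity of Silva spaces: if a locally convex space `E` is the locally
convex direct limit of an increasing sequence of Banach spaces with compact inclusion
maps, then every compact subset of `E` is contained in some step `E_j` and is compact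
there. -/
theorem stmt6 (E : Type) [AddCommGroup E] [Module ℝ E] [TopologicalSpace E]
    [IsTopologicalAddGroup E] [ContinuousSMul ℝ E] [LocallyConvexSpace ℝ E]
    (Ej : ℕ → Type) [∀ j, NormedAddCommGroup (Ej j)] [∀ j, NormedSpace ℝ (Ej j)]
    [∀ j, CompleteSpace (Ej j)]
    (ι : ∀ j, Ej j →ₗ[ℝ] E) (hinj : ∀ j, Function.Injective (ι j))
    (hcont : ∀ j, Continuous (ι j))
    (step : ∀ j, Ej j →ₗ[ℝ] Ej (j + 1))
    (hstep : ∀ j x, ι (j + 1) (step j x) = ι j x)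
    (hcompact : ∀ j, IsCompactOperator (⇑(step j)))
    (hunion : ∀ x : E, ∃ j, x ∈ LinearMap.range (ι j))
    (hfinal : ∀ (F : Type) [AddCommGroup F] [Module ℝ F] [TopologicalSpace F]
      [IsTopologicalAddGroup F] [ContinuousSMul ℝ F] [LocallyConvexSpace ℝ F]
      (f : E →ₗ[ℝ] F), (∀ j, Continuous (f ∘ ι j)) → Continuous f)
    (K : Set E) (hK : IsCompact K) :
    ∃ j, K ⊆ Set.range (ι j) ∧ IsCompact ((ι j) ⁻¹' K) := by
  rcases K.eq_empty_or_nonempty with rfl | hKne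
  · exact ⟨0, Set.empty_subset _, by simp [isCompact_empty]⟩
  by_contra hgoal
  push_neg at hgoal
  haveI hT2 : T2Space E := silva_t2 ι step hstep hinj hcompact hunion hfinal
  have hstep1 : ∀ j, K ⊆ Set.range (ι j) → ¬ Bornology.IsBounded ((ι j) ⁻¹' K) := by
    intro j hKr hbdd
    refine hgoal (j + 1) (fun x hx => ?_) ?_
    · obtain ⟨y, hy⟩ := hKr hx
      exact ⟨step j y, by rw [hstep]; exact hy⟩
    · obtain ⟨Kc, hKc, hsub⟩ := (hcompact j).image_subset_compact_of_bounded hbdd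
      have hclosed : IsClosed ((ι (j + 1)) ⁻¹' K) := hK.isClosed.preimage (hcont (j + 1))
      have hsub2 : (ι (j + 1)) ⁻¹' K ⊆ closure (step j '' ((ι j) ⁻¹' K)) := by
        intro y hy
        obtain ⟨z, hz⟩ := hKr hy
        have hzy : step j z = y := hinj (j + 1) (by rw [hstep]; exact hz)
        refine subset_closure ⟨z, ?_, hzy⟩
        rw [Set.mem_preimage, hz]
        exact hy
      exact (hKc.closure_of_subset hsub).of_isClosed_subset hclosed hsub2
  have hpick : ∀ m (e : ℕ → ℝ), (∀ k, 0 < e k) →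
      ∃ y, y ∈ K ∧ y ∉ ι m '' ((2 * (m : ℝ) + 2) • VV (Ej := Ej) step e m) := by
    intro m e hepos
    by_cases hra : K ⊆ Set.range (ι m)
    · have hnb := hstep1 m hra
      have hcV : IsCompact ((2 * (m : ℝ) + 2) • VV (Ej := Ej) step e m) :=
        (VV_isCompact step hcompact e m).smul _
      obtain ⟨R, hR⟩ := hcV.isBounded.subset_closedBall 0
      have hns : ¬ ((ι m) ⁻¹' K ⊆ Metric.closedBall 0 R) :=
        fun hsub => hnb (Metric.isBounded_closedBall.subset hsub)
      obtain ⟨y, hyK, hyR⟩ := Set.not_subset.1 hns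
      refine ⟨ι m y, hyK, ?_⟩
      rintro ⟨v, hv, hvy⟩
      have hvyeq : v = y := hinj m hvy
      subst hvyeq
      exact hyR (hR hv)
    · obtain ⟨y, hyK, hyr⟩ := Set.not_subset.1 hra
      exact ⟨y, hyK, fun ⟨v, _, hvy⟩ => hyr ⟨v, hvy⟩⟩
  obtain ⟨ε, xs, hεpos, hxsK, hP⟩ := rec_master ι step hstep hinj hcompact K hpick
  have hgc := gaugeUU_continuous ι step hstep hunion hfinal hεpos
  obtain ⟨M, hM⟩ := (hK.image hgc).bddAbove
  obtain ⟨n, hn⟩ := exists_nat_gt M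
  have hlow : (2 * (n : ℝ) + 2) ≤ gauge (UU (Ej := Ej) ι step ε) (xs n) :=
    gauge_UU_lower ι step hstep hunion hεpos (by positivity) (hP n)
  have hup : gauge (UU (Ej := Ej) ι step ε) (xs n) ≤ M :=
    hM ⟨xs n, hxsK n, rfl⟩
  have hn0 : (0 : ℝ) ≤ (n : ℝ) := Nat.cast_nonneg n
  linarith
end Silva3
end

section
/- Let E₁, E₂, F₁, F₂ be Banach spaces, θ₁ : E₁ → F₁ and θ₂ : E₂ → F₂ continuous linear maps, with θ₂ a compact operator. Let T₁ : G₁ → E₁ and T₂ : G₂ → E₂ be topological linear embeddings of locally convex spaces with closed image, and suppose κ : G₁ → G₂ is a linear map such that T₂ ∘ κ = h ∘ T₁ for a compact operator h : E₁ → E₂. Then κ is a compact operator. -/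
/-- If `T₁, T₂` are closed topological linear embeddings into Banach spaces and
`κ` is a linear map satisfying `T₂ ∘ κ = h ∘ T₁` for a compact operator `h`, then
`κ` is a compact operator. -/
theorem stmt7 (E₁ E₂ F₁ F₂ G₁ G₂ : Type*)
    [NormedAddCommGroup E₁] [NormedSpace ℝ E₁] [CompleteSpace E₁]
    [NormedAddCommGroup E₂] [NormedSpace ℝ E₂] [CompleteSpace E₂]
    [NormedAddCommGroup F₁] [NormedSpace ℝ F₁] [CompleteSpace F₁]
    [NormedAddCommGroup F₂] [NormedSpace ℝ F₂] [CompleteSpace F₂]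
    [AddCommGroup G₁] [Module ℝ G₁] [TopologicalSpace G₁] [IsTopologicalAddGroup G₁]
    [ContinuousSMul ℝ G₁] [LocallyConvexSpace ℝ G₁]
    [AddCommGroup G₂] [Module ℝ G₂] [TopologicalSpace G₂] [IsTopologicalAddGroup G₂]
    [ContinuousSMul ℝ G₂] [LocallyConvexSpace ℝ G₂]
    (θ₁ : E₁ →L[ℝ] F₁) (θ₂ : E₂ →L[ℝ] F₂) (hθ₂ : IsCompactOperator (⇑θ₂))
    (T₁ : G₁ →ₗ[ℝ] E₁) (T₂ : G₂ →ₗ[ℝ] E₂)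
    (hT₁ind : Topology.IsInducing (⇑T₁)) (hT₁inj : Function.Injective T₁)
    (hT₁cl : IsClosed (Set.range (⇑T₁)))
    (hT₂ind : Topology.IsInducing (⇑T₂)) (hT₂inj : Function.Injective T₂)
    (hT₂cl : IsClosed (Set.range (⇑T₂)))
    (κ : G₁ →ₗ[ℝ] G₂) (h : E₁ →L[ℝ] E₂) (hh : IsCompactOperator (⇑h))
    (hcomm : ∀ x, T₂ (κ x) = h (T₁ x)) :
    IsCompactOperator (⇑κ) := by
  obtain ⟨K, hK, hKmem⟩ := hh
  have hT₂ce : Topology.IsClosedEmbedding (⇑T₂) := ⟨⟨hT₂ind, hT₂inj⟩, hT₂cl⟩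
  refine ⟨(⇑T₂) ⁻¹' K, hT₂ce.isCompact_preimage hK, ?_⟩
  have heq : (⇑κ) ⁻¹' ((⇑T₂) ⁻¹' K) = (⇑T₁) ⁻¹' ((⇑h) ⁻¹' K) := by
    ext x; simp [Set.mem_preimage, hcomm]
  rw [heq, hT₁ind.nhds_eq_comap]
  exact Filter.preimage_mem_comap (by simpa using hKmem)
end
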